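/- Let n_1, n_2 ≥ 3 be natural numbers, let ε, p be real numbers with 0 ≤ ε < p ≤ 1, and let λ be a real number with 0 < λ < 1/(n_1 + n_2 − 1). Let (γ_{11}, γ_{12}, γ_{21}, γ_{22}) be the unique real solution of the system γ_{11} = 1 + λ·γ_{11}·((n_1−2)·p + 1) + λ·γ_{12}·n_2·ε; γ_{12} = 1 + λ·γ_{21}·((n_1−1)·ε + 1) + λ·γ_{22}·(n_2−1)·p; γ_{21} = 1 + λ·γ_{11}·(n_1−1)·p + λ·γ_{12}·((n_2−1)·ε + 1); γ_{22} = 1 + λ·γ_{21}·n_1·ε + λ·γ_{22}·((n_2−2)·p + 1). Then: (i) if n_1 ≥ n_2 + 2 then γ_{11} > γ_{12} and γ_{22} < γ_{21}; (ii) if n_2 ≥ n_1 + 2 then γ_{11} < γ_{12} and γ_{22} > γ_{21}; (iii) if n_1 = n_2 then γ_{11} < γ_{12} and γ_{22} < γ_{21}. -/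
import Mathlib

private def QQ (a b p e L : ℝ) : ℝ :=
  a*(1-e*L)*(1-L+p*L) - b*(1-L-p*L*L+p*e*L*L) + (-1+L*L+e*L-e*L*L-2*p*L-2*p*L*L+2*p*e*L*L)

private lemma aux_pos (D u r : ℝ) (hD : 0 < D) (h : D * u = r) (hr : 0 < r) : 0 < u := by
  by_contra hc
  push_neg at hc
  nlinarith

private lemma Qneg (a b p e L : ℝ) (ha : 3 ≤ a) (hab : a ≤ b) (he : 0 ≤ e)
    (hep : e < p) (hp : p ≤ 1) (hL : 0 < L) (hs : L*(a+b-1) < 1) : QQ a b p e L < 0 := by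
  have hp0 : 0 < p := lt_of_le_of_lt he hep
  have he1 : e < 1 := lt_of_lt_of_le hep hp
  have h5 : 5*L < 1 := by nlinarith
  have h2a : L*(2*a-1) < 1 := by nlinarith
  have hB : 0 < 1-L-p*L*L+p*e*L*L := by
    nlinarith [mul_nonneg (sub_nonneg.2 hp) (sq_nonneg L),
      mul_nonneg (mul_nonneg (le_of_lt hp0) he) (sq_nonneg L), mul_pos hL hL]
  have hba : 0 ≤ (b - a) * (1-L-p*L*L+p*e*L*L) := mul_nonneg (by linarith) (le_of_lt hB)
  have hkey : a*((1-e*L)*(1-L+p*L) - (1-L-p*L*L+p*e*L*L))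
      + (-1+L*L+e*L-e*L*L-2*p*L-2*p*L*L+2*p*e*L*L) < 0 := by
    have hd : a*((1-e*L)*(1-L+p*L) - (1-L-p*L*L+p*e*L*L))
        = (a*L)*(p-e) + (a*L)*L*(e*(1-p)+p*(1-e)) := by ring
    have h2a' : 2*(a*L) < 1 + L := by nlinarith
    have hF : (1+L)*(p-e)/2 + (1+L)*L*(e*(1-p)+p*(1-e))/2
        + (-1+L*L+e*L-e*L*L-2*p*L-2*p*L*L+2*p*e*L*L) < 0 := by
      nlinarith [mul_pos hL hp0, mul_nonneg he (le_of_lt hL), mul_pos hL hL,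
        mul_nonneg (mul_nonneg he (le_of_lt hL)) (le_of_lt hL),
        mul_nonneg (mul_nonneg (le_of_lt hp0) (le_of_lt hL)) (le_of_lt hL),
        mul_nonneg (mul_nonneg (mul_nonneg he (le_of_lt hp0)) (le_of_lt hL)) (le_of_lt hL),
        mul_nonneg (sub_nonneg.2 hp) (le_of_lt hL),
        mul_nonneg (sub_nonneg.2 (le_of_lt he1)) (le_of_lt hL),
        mul_pos hL (sub_pos.2 hep)]
    have hposL : 0 ≤ e*(1-p)+p*(1-e) := by nlinarith
    have hb1 : (a*L)*(p-e) ≤ (1+L)*(p-e)/2 := by nlinarith [mul_pos hL (sub_pos.2 hep)]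
    have hb2 : (a*L)*L*(e*(1-p)+p*(1-e)) ≤ (1+L)*L*(e*(1-p)+p*(1-e))/2 := by
      nlinarith [mul_nonneg (le_of_lt hL) hposL]
    linarith [hd ▸ (by linarith [hb1, hb2] :
      a*((1-e*L)*(1-L+p*L) - (1-L-p*L*L+p*e*L*L)) ≤ (1+L)*(p-e)/2 + (1+L)*L*(e*(1-p)+p*(1-e))/2)]
  have hQ : QQ a b p e L = a*((1-e*L)*(1-L+p*L) - (1-L-p*L*L+p*e*L*L))
      + (-1+L*L+e*L-e*L*L-2*p*L-2*p*L*L+2*p*e*L*L) - (b-a)*(1-L-p*L*L+p*e*L*L) := by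
    unfold QQ; ring
  rw [hQ]; linarith

private lemma Qpos (a b p e L : ℝ) (hb : 3 ≤ b) (hab : b + 2 ≤ a) (he : 0 ≤ e)
    (hep : e < p) (hp : p ≤ 1) (hL : 0 < L) (hs : L*(a+b-1) < 1) : 0 < QQ a b p e L := by
  have hp0 : 0 < p := lt_of_le_of_lt he hep
  have he1 : e < 1 := lt_of_lt_of_le hep hp
  have h7 : 7*L < 1 := by nlinarith
  have hA : 0 < (1-e*L)*(1-L+p*L) := by
    have h1 : 0 < 1 - e*L := by nlinarith [mul_lt_mul_of_pos_right he1 hL]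
    have h2 : 0 < 1 - L + p*L := by nlinarith [mul_pos hL hp0]
    exact mul_pos h1 h2
  have hAB : 0 < (1-e*L)*(1-L+p*L) - (1-L-p*L*L+p*e*L*L) := by
    nlinarith [mul_pos hL (sub_pos.2 hep),
      mul_nonneg (mul_nonneg (le_of_lt hL) (le_of_lt hL)) (mul_nonneg he (sub_nonneg.2 hp)),
      mul_nonneg (mul_nonneg (le_of_lt hL) (le_of_lt hL)) (mul_nonneg (le_of_lt hp0) (sub_nonneg.2 (le_of_lt he1)))]
  have h2AC : 0 < 2*((1-e*L)*(1-L+p*L)) + (-1+L*L+e*L-e*L*L-2*p*L-2*p*L*L+2*p*e*L*L) := by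
    nlinarith [mul_nonneg (mul_nonneg (sub_nonneg.2 (le_of_lt he1)) (le_of_lt hL)) (by nlinarith : (0:ℝ) ≤ 1 - L),
      mul_nonneg (sub_nonneg.2 hp) (sq_nonneg L), mul_pos hL hL]
  have hQ : QQ a b p e L = (a-b-2)*((1-e*L)*(1-L+p*L))
      + b*((1-e*L)*(1-L+p*L) - (1-L-p*L*L+p*e*L*L))
      + (2*((1-e*L)*(1-L+p*L)) + (-1+L*L+e*L-e*L*L-2*p*L-2*p*L*L+2*p*e*L*L)) := by
    unfold QQ; ring
  rw [hQ]
  have t1 : 0 ≤ (a-b-2)*((1-e*L)*(1-L+p*L)) := mul_nonneg (by linarith) (le_of_lt hA)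
  have t2 : 0 < b*((1-e*L)*(1-L+p*L) - (1-L-p*L*L+p*e*L*L)) := mul_pos (by linarith) hAB
  linarith

set_option maxHeartbeats 2000000 in
private lemma key (a b p e L g11 g12 g21 g22 : ℝ)
    (ha : 3 ≤ a) (hb : 3 ≤ b) (he : 0 ≤ e) (hep : e < p) (hp : p ≤ 1)
    (hL : 0 < L) (hs : L*(a+b-1) < 1)
    (h11 : g11 = 1 + L * g11 * ((a-2)*p+1) + L * g12 * b * e)
    (h12 : g12 = 1 + L * g21 * ((a-1)*e+1) + L * g22 * (b-1) * p)
    (h21 : g21 = 1 + L * g11 * (a-1) * p + L * g12 * ((b-1)*e+1))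
    (h22 : g22 = 1 + L * g21 * a * e + L * g22 * ((b-2)*p+1)) :
    (b + 2 ≤ a → g12 < g11 ∧ g22 < g21) ∧ (a + 2 ≤ b → g11 < g12 ∧ g21 < g22) ∧
    (a = b → g11 < g12 ∧ g22 < g21) := by
  have hp0 : 0 < p := lt_of_le_of_lt he hep
  have he1 : e < 1 := lt_of_lt_of_le hep hp
  have hpe : 0 < p - e := sub_pos.2 hep
  have hpe1 : (0:ℝ) ≤ 1 - p*e := by nlinarith [mul_nonneg (le_of_lt hp0) (sub_nonneg.2 (le_of_lt he1))]
  have hs' : L*(b+a-1) < 1 := by linarith [hs]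
  have hP1 : L*b < 1 - L*((a-2)*p+1) := by
    nlinarith [mul_nonneg (mul_nonneg (le_of_lt hL) (by linarith : (0:ℝ) ≤ a-2)) (sub_nonneg.2 hp)]
  have hP2 : L*a < 1 - L*((b-2)*p+1) := by
    nlinarith [mul_nonneg (mul_nonneg (le_of_lt hL) (by linarith : (0:ℝ) ≤ b-2)) (sub_nonneg.2 hp)]
  have hP1p : 0 < 1 - L*((a-2)*p+1) := by nlinarith [hP1, mul_pos hL (by linarith : (0:ℝ) < b)]
  have hP2p : 0 < 1 - L*((b-2)*p+1) := by nlinarith [hP2, mul_pos hL (by linarith : (0:ℝ) < a)]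
  have hV0 : 0 < L*((b-1)*e+1)*(1 - L*((a-2)*p+1)) + L*L*((a-1)*p)*(b*e) := by
    have h1 : 0 < L*((b-1)*e+1) := by nlinarith [mul_nonneg he (by linarith : (0:ℝ) ≤ b-1)]
    nlinarith [mul_pos h1 hP1p, mul_nonneg (mul_nonneg (le_of_lt (mul_pos hL hL)) (mul_nonneg (by linarith : (0:ℝ) ≤ a-1) (le_of_lt hp0))) (mul_nonneg (by linarith : (0:ℝ) ≤ b) he)]
  have hU : L*((a-1)*e+1)*(1 - L*((b-2)*p+1)) + L*L*((b-1)*p)*(a*e) < 1 - L*((b-2)*p+1) := by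
    have h1 : L*(b-1) < 1 - L*((a-1)*e+1) := by
      nlinarith [mul_nonneg (mul_nonneg (le_of_lt hL) (by linarith : (0:ℝ) ≤ a-1)) (sub_nonneg.2 (le_of_lt he1))]
    have h2 := mul_lt_mul'' hP2 h1 (mul_nonneg (le_of_lt hL) (by linarith)) (mul_nonneg (le_of_lt hL) (by linarith))
    have h3 : (0:ℝ) ≤ L*L*a*(b-1)*(1-p*e) :=
      mul_nonneg (mul_nonneg (mul_nonneg (le_of_lt (mul_pos hL hL)) (by linarith)) (by linarith)) hpe1
    nlinarith [h2, h3]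
  have hV : L*((b-1)*e+1)*(1 - L*((a-2)*p+1)) + L*L*((a-1)*p)*(b*e) < 1 - L*((a-2)*p+1) := by
    have h1 : L*(a-1) < 1 - L*((b-1)*e+1) := by
      nlinarith [mul_nonneg (mul_nonneg (le_of_lt hL) (by linarith : (0:ℝ) ≤ b-1)) (sub_nonneg.2 (le_of_lt he1))]
    have h2 := mul_lt_mul'' hP1 h1 (mul_nonneg (le_of_lt hL) (by linarith)) (mul_nonneg (le_of_lt hL) (by linarith))
    have h3 : (0:ℝ) ≤ L*L*b*(a-1)*(1-p*e) :=
      mul_nonneg (mul_nonneg (mul_nonneg (le_of_lt (mul_pos hL hL)) (by linarith)) (by linarith)) hpe1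
    nlinarith [h2, h3]
  have hD : 0 < ((1 - L*((a-2)*p+1)) * (1 - L*((b-2)*p+1)) - (L*((a-1)*e+1)*(1 - L*((b-2)*p+1)) + L*L*((b-1)*p)*(a*e)) * (L*((b-1)*e+1)*(1 - L*((a-2)*p+1)) + L*L*((a-1)*p)*(b*e))) := by
    nlinarith [mul_lt_mul_of_pos_right hU hV0, mul_lt_mul_of_pos_left hV hP2p]
  have hu : ((1 - L*((a-2)*p+1)) * (1 - L*((b-2)*p+1)) - (L*((a-1)*e+1)*(1 - L*((b-2)*p+1)) + L*L*((b-1)*p)*(a*e)) * (L*((b-1)*e+1)*(1 - L*((a-2)*p+1)) + L*L*((a-1)*p)*(b*e))) * (g11 - g12) = L * (p-e) * QQ a b p e L := by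
    unfold QQ
    linear_combination (1 + (-1)*L + (-1)*L*L + L*L*L + 2*e*L*L + (-2)*e*L*L*L + (-1)*e*e*L*L + e*e*L*L*L + 2*p*L + p*L*L + (-3)*p*L*L*L + (-1)*p*e*L*L + 5*p*e*L*L*L + (-2)*p*e*e*L*L*L + 2*p*p*L*L*L + (-2)*p*p*e*L*L*L + (-1)*b*e*L*L + b*e*L*L*L + b*e*e*L*L + (-1)*b*e*e*L*L*L + (-1)*b*p*L + b*p*L*L*L + (-4)*b*p*e*L*L*L + 3*b*p*e*e*L*L*L + (-1)*b*p*p*L*L*L + b*p*p*e*L*L*L + b*b*p*e*L*L*L + (-1)*b*b*p*e*e*L*L*L + (-1)*a*e*L*L + a*e*L*L*L + a*e*e*L*L + (-1)*a*e*e*L*L*L + (-1)*a*p*L*L + a*p*L*L*L + 2*a*p*e*L*L + (-3)*a*p*e*L*L*L + a*p*e*e*L*L*L + (-2)*a*p*p*L*L*L + 3*a*p*p*e*L*L*L + (-1)*a*b*e*e*L*L + a*b*e*e*L*L*L + (-1)*a*b*p*e*e*L*L*L + a*b*p*p*L*L*L + (-1)*a*b*p*p*e*L*L*L + (-1)*a*a*p*e*L*L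 + a*a*p*e*L*L*L + (-1)*a*a*p*p*e*L*L*L)*h11 + ((-1) + 2*L + (-1)*L*L + (-4)*p*L + 4*p*L*L + (-4)*p*p*L*L + b*e*L + (-1)*b*e*L*L + b*p*L + (-1)*b*p*L*L + 2*b*p*e*L*L + 2*b*p*p*L*L + (-1)*b*b*p*e*L*L + a*p*L + (-1)*a*p*L*L + 2*a*p*p*L*L + (-1)*a*b*p*p*L*L)*h12 + ((-1)*L + 2*L*L + (-1)*L*L*L + e*L + (-2)*e*L*L + e*L*L*L + (-4)*p*L*L + 4*p*L*L*L + 4*p*e*L*L + (-4)*p*e*L*L*L + (-4)*p*p*L*L*L + 4*p*p*e*L*L*L + b*e*L*L + (-1)*b*e*L*L*L + (-1)*b*e*e*L*L + b*e*e*L*L*L + b*p*L*L + (-1)*b*p*L*L*L + (-1)*b*p*e*L*L + 3*b*p*e*L*L*L + (-2)*b*p*e*e*L*L*L + 2*b*p*p*L*L*L + (-2)*b*p*p*e*L*L*L + (-1)*b*b*p*e*L*L*L + b*b*p*e*e*L*L*L + (-1)*a*e*L + 2*a*e*L*L + (-1)*a*e*L*L*L + a*p*L*L + (-1)*a*p*L*L*L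 + (-4)*a*p*e*L*L + 4*a*p*e*L*L*L + 2*a*p*p*L*L*L + (-4)*a*p*p*e*L*L*L + a*b*e*e*L*L + (-1)*a*b*e*e*L*L*L + a*b*p*e*e*L*L*L + (-1)*a*b*p*p*L*L*L + a*b*p*p*e*L*L*L + a*a*p*e*L*L + (-1)*a*a*p*e*L*L*L + a*a*p*p*e*L*L*L)*h21 + (p*L + (-1)*p*L*L + 2*p*p*L*L + (-1)*b*p*L + b*p*L*L + (-1)*b*p*e*L*L + (-2)*b*p*p*L*L + b*b*p*e*L*L + (-1)*a*p*p*L*L + a*b*p*p*L*L)*h22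
  have hv : ((1 - L*((a-2)*p+1)) * (1 - L*((b-2)*p+1)) - (L*((a-1)*e+1)*(1 - L*((b-2)*p+1)) + L*L*((b-1)*p)*(a*e)) * (L*((b-1)*e+1)*(1 - L*((a-2)*p+1)) + L*L*((a-1)*p)*(b*e))) * (g21 - g22) = -(L * (p-e) * QQ b a p e L) := by
    unfold QQ
    linear_combination ((-1)*p*L + p*L*L + (-2)*p*p*L*L + b*p*p*L*L + a*p*L + (-1)*a*p*L*L + a*p*e*L*L + 2*a*p*p*L*L + (-1)*a*b*p*p*L*L + (-1)*a*a*p*e*L*L)*h11 + (L + (-2)*L*L + L*L*L + (-1)*e*L + 2*e*L*L + (-1)*e*L*L*L + 4*p*L*L + (-4)*p*L*L*L + (-4)*p*e*L*L + 4*p*e*L*L*L + 4*p*p*L*L*L + (-4)*p*p*e*L*L*L + b*e*L + (-2)*b*e*L*L + b*e*L*L*L + (-1)*b*p*L*L + b*p*L*L*L + 4*b*p*e*L*L + (-4)*b*p*e*L*L*L + (-2)*b*p*p*L*L*L + 4*b*p*p*e*L*L*L + (-1)*b*b*p*e*L*L + b*b*p*e*L*L*L + (-1)*b*b*p*p*e*L*L*L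 + (-1)*a*e*L*L + a*e*L*L*L + a*e*e*L*L + (-1)*a*e*e*L*L*L + (-1)*a*p*L*L + a*p*L*L*L + a*p*e*L*L + (-3)*a*p*e*L*L*L + 2*a*p*e*e*L*L*L + (-2)*a*p*p*L*L*L + 2*a*p*p*e*L*L*L + (-1)*a*b*e*e*L*L + a*b*e*e*L*L*L + (-1)*a*b*p*e*e*L*L*L + a*b*p*p*L*L*L + (-1)*a*b*p*p*e*L*L*L + a*a*p*e*L*L*L + (-1)*a*a*p*e*e*L*L*L)*h12 + (1 + (-2)*L + L*L + 4*p*L + (-4)*p*L*L + 4*p*p*L*L + (-1)*b*p*L + b*p*L*L + (-2)*b*p*p*L*L + (-1)*a*e*L + a*e*L*L + (-1)*a*p*L + a*p*L*L + (-2)*a*p*e*L*L + (-2)*a*p*p*L*L + a*b*p*p*L*L + a*a*p*e*L*L)*h21 + ((-1) + L + L*L + (-1)*L*L*L + (-2)*e*L*L + 2*e*L*L*L + e*e*L*L + (-1)*e*e*L*L*L + (-2)*p*L + (-1)*p*L*L + 3*p*L*L*L + p*e*L*L + (-5)*p*e*L*L*L + 2*p*e*e*L*L*L + (-2)*p*p*L*L*L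 + 2*p*p*e*L*L*L + b*e*L*L + (-1)*b*e*L*L*L + (-1)*b*e*e*L*L + b*e*e*L*L*L + b*p*L*L + (-1)*b*p*L*L*L + (-2)*b*p*e*L*L + 3*b*p*e*L*L*L + (-1)*b*p*e*e*L*L*L + 2*b*p*p*L*L*L + (-3)*b*p*p*e*L*L*L + b*b*p*e*L*L + (-1)*b*b*p*e*L*L*L + b*b*p*p*e*L*L*L + a*e*L*L + (-1)*a*e*L*L*L + (-1)*a*e*e*L*L + a*e*e*L*L*L + a*p*L + (-1)*a*p*L*L*L + 4*a*p*e*L*L*L + (-3)*a*p*e*e*L*L*L + a*p*p*L*L*L + (-1)*a*p*p*e*L*L*L + a*b*e*e*L*L + (-1)*a*b*e*e*L*L*L + a*b*p*e*e*L*L*L + (-1)*a*b*p*p*L*L*L + a*b*p*p*e*L*L*L + (-1)*a*a*p*e*L*L*L + a*a*p*e*e*L*L*L)*h22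
  have hu' : ((1 - L*((a-2)*p+1)) * (1 - L*((b-2)*p+1)) - (L*((a-1)*e+1)*(1 - L*((b-2)*p+1)) + L*L*((b-1)*p)*(a*e)) * (L*((b-1)*e+1)*(1 - L*((a-2)*p+1)) + L*L*((a-1)*p)*(b*e))) * (g12 - g11) = -(L * (p-e) * QQ a b p e L) := by linear_combination -hu
  have hv' : ((1 - L*((a-2)*p+1)) * (1 - L*((b-2)*p+1)) - (L*((a-1)*e+1)*(1 - L*((b-2)*p+1)) + L*L*((b-1)*p)*(a*e)) * (L*((b-1)*e+1)*(1 - L*((a-2)*p+1)) + L*L*((a-1)*p)*(b*e))) * (g22 - g21) = L * (p-e) * QQ b a p e L := by linear_combination -hv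
  refine ⟨fun hba => ?_, fun hab => ?_, fun hab => ?_⟩
  · have hQ1 : 0 < QQ a b p e L := Qpos a b p e L hb hba he hep hp hL hs
    have hQ2 : QQ b a p e L < 0 := Qneg b a p e L hb (by linarith) he hep hp hL hs'
    exact ⟨sub_pos.1 (aux_pos _ _ _ hD hu (mul_pos (mul_pos hL hpe) hQ1)),
      sub_pos.1 (aux_pos _ _ _ hD hv (neg_pos.2 (mul_neg_of_pos_of_neg (mul_pos hL hpe) hQ2)))⟩
  · have hQ1 : QQ a b p e L < 0 := Qneg a b p e L ha (by linarith) he hep hp hL hs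
    have hQ2 : 0 < QQ b a p e L := Qpos b a p e L ha hab he hep hp hL hs'
    exact ⟨sub_pos.1 (aux_pos _ _ _ hD hu' (neg_pos.2 (mul_neg_of_pos_of_neg (mul_pos hL hpe) hQ1))),
      sub_pos.1 (aux_pos _ _ _ hD hv' (mul_pos (mul_pos hL hpe) hQ2))⟩
  · have hQ1 : QQ a b p e L < 0 := Qneg a b p e L ha (le_of_eq hab) he hep hp hL hs
    have hQ2 : QQ b a p e L < 0 := Qneg b a p e L hb (ge_of_eq hab) he hep hp hL hs'
    exact ⟨sub_pos.1 (aux_pos _ _ _ hD hu' (neg_pos.2 (mul_neg_of_pos_of_neg (mul_pos hL hpe) hQ1))),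
      sub_pos.1 (aux_pos _ _ _ hD hv (neg_pos.2 (mul_neg_of_pos_of_neg (mul_pos hL hpe) hQ2)))⟩

/-- Lemma 3: For the two-group stochastic block system with group sizes
`n₁, n₂ ≥ 3`, intra-group probability `p`, inter-group probability `ε`,
`0 ≤ ε < p ≤ 1`, `0 < λ < 1/(n₁ + n₂ - 1)`, and `(γ₁₁, γ₁₂, γ₂₁, γ₂₂)` solving the
system: if `n₁ ≥ n₂ + 2` then `γ₁₁ > γ₁₂` and `γ₂₂ < γ₂₁`; if `n₂ ≥ n₁ + 2` then
`γ₁₁ < γ₁₂` and `γ₂₂ > γ₂₁`; if `n₁ = n₂` then `γ₁₁ < γ₁₂` and `γ₂₂ < γ₂₁`. -/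
theorem stmt_18 (n₁ n₂ : ℕ) (hn₁ : 3 ≤ n₁) (hn₂ : 3 ≤ n₂)
    (ε p lam : ℝ) (hε0 : 0 ≤ ε) (hεp : ε < p) (hp1 : p ≤ 1)
    (hlam0 : 0 < lam) (hlam1 : lam < 1 / ((n₁ : ℝ) + (n₂ : ℝ) - 1))
    (γ11 γ12 γ21 γ22 : ℝ)
    (h11 : γ11 = 1 + lam * γ11 * (((n₁ : ℝ) - 2) * p + 1) + lam * γ12 * (n₂ : ℝ) * ε)
    (h12 : γ12 = 1 + lam * γ21 * (((n₁ : ℝ) - 1) * ε + 1) +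
      lam * γ22 * ((n₂ : ℝ) - 1) * p)
    (h21 : γ21 = 1 + lam * γ11 * ((n₁ : ℝ) - 1) * p +
      lam * γ12 * (((n₂ : ℝ) - 1) * ε + 1))
    (h22 : γ22 = 1 + lam * γ21 * (n₁ : ℝ) * ε +
      lam * γ22 * (((n₂ : ℝ) - 2) * p + 1)) :
    (n₁ ≥ n₂ + 2 → γ11 > γ12 ∧ γ22 < γ21) ∧
    (n₂ ≥ n₁ + 2 → γ11 < γ12 ∧ γ22 > γ21) ∧
    (n₁ = n₂ → γ11 < γ12 ∧ γ22 < γ21) := by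
  have ha : (3:ℝ) ≤ (n₁:ℝ) := by exact_mod_cast hn₁
  have hb : (3:ℝ) ≤ (n₂:ℝ) := by exact_mod_cast hn₂
  have hden : (0:ℝ) < (n₁:ℝ) + (n₂:ℝ) - 1 := by linarith
  have hs : lam * ((n₁:ℝ) + (n₂:ℝ) - 1) < 1 := by
    have := (lt_div_iff₀ hden).1 hlam1
    linarith
  obtain ⟨k1, k2, k3⟩ := key (n₁:ℝ) (n₂:ℝ) p ε lam γ11 γ12 γ21 γ22 ha hb hε0 hεp hp1 hlam0 hs h11 h12 h21 h22
  refine ⟨fun h => ?_, fun h => ?_, fun h => ?_⟩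
  · have h' : (n₂:ℝ) + 2 ≤ (n₁:ℝ) := by exact_mod_cast h
    exact ⟨(k1 h').1, (k1 h').2⟩
  · have h' : (n₁:ℝ) + 2 ≤ (n₂:ℝ) := by exact_mod_cast h
    exact ⟨(k2 h').1, (k2 h').2⟩
  · have h' : (n₁:ℝ) = (n₂:ℝ) := by exact_mod_cast h
    exact ⟨(k3 h').1, (k3 h').2⟩
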